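/- arXiv:2205.05382 — 9 statements merged into one kernel-verified Lean document; each statement's English description precedes it below -/
import Mathlib

section
/- Let S be a monad on a category C, T a monad on a category D, and L ⊣ R an adjunction with L : C → D, R : D → C, unit η : Id ⇒ R∘L and counit ε : L∘R ⇒ Id. A natural transformation ρ : S∘R ⇒ R∘T is an Eilenberg-Moore law if and only if its transpose λ : L∘S ⇒ T∘L, defined componentwise by λ_A = ε_{T(L(A))} ∘ L(ρ_{L(A)}) ∘ L(S(η_A)), is a Kleisli law. -/
open CategoryTheory

universe v₁ v₂ u₁ u₂

variable {C : Type u₁} [Category.{v₁} C] {D : Type u₂} [Category.{v₂} D]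

/-- The transpose along an adjunction `L ⊣ R` of a natural transformation
`ρ : S∘R ⟹ R∘T`, with components `λ_A = ε_{T(L(A))} ∘ L(ρ_{L(A)}) ∘ L(S(η_A))`. -/
def transpose (S : Monad C) (T : Monad D) {L : C ⥤ D} {R : D ⥤ C} (adj : L ⊣ R)
    (ρ : R ⋙ S.toFunctor ⟶ T.toFunctor ⋙ R) :
    S.toFunctor ⋙ L ⟶ L ⋙ T.toFunctor where
  app A := L.map (S.map (adj.unit.app A)) ≫ L.map (ρ.app (L.obj A)) ≫
      adj.counit.app (T.obj (L.obj A))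
  naturality X Y f := by
    have hρ := ρ.naturality (L.map f)
    simp only [Functor.comp_map] at hρ
    have hη := adj.unit.naturality f
    simp only [Functor.comp_map, Functor.id_map] at hη
    have hε := adj.counit.naturality (T.map (L.map f))
    simp only [Functor.comp_map, Functor.id_map] at hε
    simp only [Functor.comp_map]
    rw [← Category.assoc, ← L.map_comp, ← S.map_comp, hη, S.map_comp, L.map_comp,
      Category.assoc, ← Category.assoc (L.map (S.map (R.map (L.map f)))), ← L.map_comp, hρ,
      L.map_comp]
    simp only [Category.assoc]
    rw [← hε]

section Aux
variable (S : Monad C) (T : Monad D) {L : C ⥤ D} {R : D ⥤ C} (adj : L ⊣ R)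
    (ρ : R ⋙ S.toFunctor ⟶ T.toFunctor ⋙ R)

lemma transpose_app (A : C) :
    (transpose S T adj ρ).app A =
      L.map (S.map (adj.unit.app A)) ≫ L.map (ρ.app (L.obj A)) ≫
        adj.counit.app (T.obj (L.obj A)) := rfl

-- homEquiv of λ_A equals Sη_A ≫ ρ_{LA}
lemma unit_transpose (A : C) :
    adj.unit.app (S.obj A) ≫ R.map ((transpose S T adj ρ).app A) =
      S.map (adj.unit.app A) ≫ ρ.app (L.obj A) := by
  have h2 := adj.unit.naturality (ρ.app (L.obj A))
  simp only [Functor.comp_map, Functor.id_map] at h2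
  simp only [transpose_app, Functor.map_comp,
    Adjunction.unit_naturality_assoc, ← Category.assoc, ← h2]
  simp

-- recover ρ from its transpose
lemma retranspose (B : D) :
    adj.unit.app (S.obj (R.obj B)) ≫ R.map ((transpose S T adj ρ).app (R.obj B)) ≫
      R.map (T.map (adj.counit.app B)) = ρ.app B := by
  have h := ρ.naturality (adj.counit.app B)
  simp only [Functor.comp_map, Functor.comp_obj, Functor.id_obj] at h
  rw [← Category.assoc, unit_transpose, Category.assoc, ← h, ← Category.assoc,
    ← S.toFunctor.map_comp]
  simp

-- λ_{RB} ≫ Tε_B = Lρ_B ≫ ε_{TB}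
lemma transpose_counit (B : D) :
    (transpose S T adj ρ).app (R.obj B) ≫ T.map (adj.counit.app B) =
      L.map (ρ.app B) ≫ adj.counit.app (T.obj B) := by
  have h := ρ.naturality (adj.counit.app B)
  simp only [Functor.comp_map, Functor.comp_obj, Functor.id_obj] at h
  have hc := adj.counit.naturality (T.map (adj.counit.app B))
  simp only [Functor.comp_map, Functor.id_map, Functor.comp_obj] at hc
  simp only [transpose_app, Category.assoc]
  rw [← hc,
    ← Category.assoc (L.map (ρ.app (L.obj (R.obj B)))), ← L.map_comp, ← h,
    L.map_comp, ← Category.assoc, ← Category.assoc, ← L.map_comp, ← S.toFunctor.map_comp]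
  simp

end Aux

section Main
variable (S : Monad C) (T : Monad D) {L : C ⥤ D} {R : D ⥤ C} (adj : L ⊣ R)
    (ρ : R ⋙ S.toFunctor ⟶ T.toFunctor ⋙ R)

lemma fwd_unit (hη : ∀ B : D, S.η.app (R.obj B) ≫ ρ.app B = R.map (T.η.app B)) (A : C) :
    L.map (S.η.app A) ≫ (transpose S T adj ρ).app A = T.η.app (L.obj A) := by
  apply (adj.homEquiv _ _).injective
  simp only [Adjunction.homEquiv_unit, R.map_comp]
  have h1 := S.η.naturality (adj.unit.app A)
  simp only [Functor.id_map, Functor.id_obj, Functor.comp_obj] at h1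
  rw [← Category.assoc, Adjunction.unit_naturality, Category.assoc, unit_transpose,
    ← Category.assoc, ← h1, Category.assoc, hη (L.obj A)]
  rfl

lemma fwd_mul
    (hμ : ∀ B : D, S.μ.app (R.obj B) ≫ ρ.app B =
        S.map (ρ.app B) ≫ ρ.app (T.obj B) ≫ R.map (T.μ.app B)) (A : C) :
    L.map (S.μ.app A) ≫ (transpose S T adj ρ).app A =
      (transpose S T adj ρ).app (S.obj A) ≫ T.map ((transpose S T adj ρ).app A) ≫
        T.μ.app (L.obj A) := by
  apply (adj.homEquiv _ _).injective
  simp only [Adjunction.homEquiv_unit, R.map_comp]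
  have h1 := S.μ.naturality (adj.unit.app A)
  simp only [Functor.comp_map, Functor.id_map, Functor.id_obj, Functor.comp_obj] at h1
  have h3 := ρ.naturality ((transpose S T adj ρ).app A)
  simp only [Functor.comp_map, Functor.id_obj, Functor.comp_obj] at h3
  calc adj.unit.app (S.obj (S.obj A)) ≫ R.map (L.map (S.μ.app A)) ≫
          R.map ((transpose S T adj ρ).app A)
      = S.μ.app A ≫ adj.unit.app (S.obj A) ≫ R.map ((transpose S T adj ρ).app A) := by
        exact adj.unit_naturality_assoc (S.μ.app A) _
    _ = S.μ.app A ≫ S.map (adj.unit.app A) ≫ ρ.app (L.obj A) := by rw [unit_transpose]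
    _ = S.map (S.map (adj.unit.app A)) ≫ S.μ.app (R.obj (L.obj A)) ≫ ρ.app (L.obj A) := by
        rw [← Category.assoc, ← h1, Category.assoc]
    _ = S.map (S.map (adj.unit.app A)) ≫ S.map (ρ.app (L.obj A)) ≫ ρ.app (T.obj (L.obj A))
          ≫ R.map (T.μ.app (L.obj A)) := by rw [hμ (L.obj A)]
    _ = S.map (adj.unit.app (S.obj A) ≫ R.map ((transpose S T adj ρ).app A)) ≫
          ρ.app (T.obj (L.obj A)) ≫ R.map (T.μ.app (L.obj A)) := by
        rw [unit_transpose, S.toFunctor.map_comp, Category.assoc]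
    _ = S.map (adj.unit.app (S.obj A)) ≫ ρ.app (L.obj (S.obj A)) ≫
          R.map (T.map ((transpose S T adj ρ).app A)) ≫ R.map (T.μ.app (L.obj A)) := by
        rw [S.toFunctor.map_comp, Category.assoc, ← Category.assoc (S.map (R.map _)), h3,
          Category.assoc]
    _ = adj.unit.app (S.obj (S.obj A)) ≫ R.map ((transpose S T adj ρ).app (S.obj A)) ≫
          R.map (T.map ((transpose S T adj ρ).app A)) ≫ R.map (T.μ.app (L.obj A)) := by
        rw [← Category.assoc, ← unit_transpose, Category.assoc]

lemma bwd_unit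
    (hη : ∀ A : C, L.map (S.η.app A) ≫ (transpose S T adj ρ).app A = T.η.app (L.obj A))
    (B : D) : S.η.app (R.obj B) ≫ ρ.app B = R.map (T.η.app B) := by
  have hu := adj.unit.naturality (S.η.app (R.obj B))
  simp only [Functor.comp_map, Functor.id_map, Functor.id_obj, Functor.comp_obj] at hu
  have hT := T.η.naturality (adj.counit.app B)
  simp only [Functor.id_map, Functor.id_obj, Functor.comp_obj] at hT
  rw [← retranspose S T adj ρ B]
  slice_lhs 1 2 => rw [hu]
  slice_lhs 2 3 => rw [← R.map_comp, hη (R.obj B)]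
  slice_lhs 2 3 => rw [← R.map_comp, ← hT, R.map_comp]
  slice_lhs 1 2 => rw [Adjunction.right_triangle_components]
  simp

lemma bwd_mul
    (hμ : ∀ A : C, L.map (S.μ.app A) ≫ (transpose S T adj ρ).app A =
        (transpose S T adj ρ).app (S.obj A) ≫ T.map ((transpose S T adj ρ).app A) ≫
          T.μ.app (L.obj A))
    (B : D) : S.μ.app (R.obj B) ≫ ρ.app B =
      S.map (ρ.app B) ≫ ρ.app (T.obj B) ≫ R.map (T.μ.app B) := by
  have hu := adj.unit.naturality (S.μ.app (R.obj B))
  simp only [Functor.comp_map, Functor.id_map, Functor.id_obj, Functor.comp_obj] at hu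
  have hTμ := T.μ.naturality (adj.counit.app B)
  simp only [Functor.comp_map, Functor.id_map, Functor.id_obj, Functor.comp_obj] at hTμ
  have hu2 := adj.unit.naturality (S.map (ρ.app B))
  simp only [Functor.comp_map, Functor.id_map, Functor.id_obj, Functor.comp_obj] at hu2
  have hlam := (transpose S T adj ρ).naturality (ρ.app B)
  simp only [Functor.comp_map, Functor.id_obj, Functor.comp_obj] at hlam
  conv_lhs => rw [← retranspose S T adj ρ B]
  conv_rhs => rw [← retranspose S T adj ρ (T.obj B)]
  -- LHS
  slice_lhs 1 2 => rw [hu]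
  slice_lhs 2 3 => rw [← R.map_comp, hμ (R.obj B), R.map_comp, R.map_comp]
  slice_lhs 4 5 => rw [← R.map_comp, ← hTμ, R.map_comp]
  slice_lhs 3 4 => rw [← R.map_comp, ← T.toFunctor.map_comp, transpose_counit,
    T.toFunctor.map_comp, R.map_comp]
  -- RHS
  slice_rhs 1 2 => rw [hu2]
  slice_rhs 2 3 => rw [← R.map_comp, hlam, R.map_comp]
  simp

end Main

/-- A natural transformation `ρ : S∘R ⟹ R∘T` is an Eilenberg-Moore law if and only if its
transpose `λ : L∘S ⟹ T∘L` along the adjunction `L ⊣ R`, with components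
`λ_A = ε_{T(L(A))} ∘ L(ρ_{L(A)}) ∘ L(S(η_A))`, is a Kleisli law. -/
theorem em_law_iff_transpose_kleisli_law
    (S : Monad C) (T : Monad D) {L : C ⥤ D} {R : D ⥤ C} (adj : L ⊣ R)
    (ρ : R ⋙ S.toFunctor ⟶ T.toFunctor ⋙ R) :
    ((∀ B : D, S.η.app (R.obj B) ≫ ρ.app B = R.map (T.η.app B)) ∧
     (∀ B : D, S.μ.app (R.obj B) ≫ ρ.app B =
        S.map (ρ.app B) ≫ ρ.app (T.obj B) ≫ R.map (T.μ.app B))) ↔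
    ((∀ A : C, L.map (S.η.app A) ≫ (transpose S T adj ρ).app A = T.η.app (L.obj A)) ∧
     (∀ A : C, L.map (S.μ.app A) ≫ (transpose S T adj ρ).app A =
        (transpose S T adj ρ).app (S.obj A) ≫ T.map ((transpose S T adj ρ).app A) ≫
          T.μ.app (L.obj (A)))) := by
  exact ⟨fun ⟨h1, h2⟩ => ⟨fwd_unit S T adj ρ h1, fwd_mul S T adj ρ h2⟩,
    fun ⟨h1, h2⟩ => ⟨bwd_unit S T adj ρ h1, bwd_mul S T adj ρ h2⟩⟩
end

section
/- Let S be a monad on C, T a monad on D, H : C → D a functor, (A, α) an Eilenberg-Moore S-algebra, (and λ_A : H(S(A)) → T(H(A)) a morphism in D). Assume the classifying coequalizer (W_α, ω_α) with coequalizer morphism q_α exists in EM(T). Then the composite u := q_α ∘ η^T_{H(A)} : H(A) → W_α is a left λ_A-morphism from α to ω_α, and it is universal: for every Eilenberg-Moore T-algebra (B, β) and every left λ_A-morphism h : H(A) → B from α to β, there exists a unique T-algebra morphism ĥ : (W_α, ω_α) → (B, β) such that ĥ ∘ u = h. Hence left λ_A-morphisms from α to β are in bijection with T-algebra morphisms (W_α,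 ω_α) → (B, β). -/
open CategoryTheory

universe v₁ v₂ u₁ u₂

/-- **Universal bimorphisms.**  Let `S` be a monad on `C`, `T` a monad on `D`, `H : C ⥤ D` a
functor, `(A, α)` an Eilenberg-Moore `S`-algebra and `lam : H(S(A)) ⟶ T(H(A))` a morphism of
`D`.  Let `e : F^T(H(S(A))) ⟶ F^T(H(A))` be the `T`-algebra morphism with underlying morphism
`μ^T_{H(A)} ∘ T(lam)`, and assume the classifying coequalizer `(W, ω)` of the parallel pair
`e, F^T(H(α))` exists in `EM(T)`, with coequalizer morphism `q` (the coequalizer property is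
stated explicitly via `hq` and `huniv`).  Then `u := q ∘ η^T_{H(A)}` is a left `lam`-morphism
from `α` to `ω`; it is universal: every left `lam`-morphism `h` from `α` to a `T`-algebra
`(B, β)` factors as `h = ĥ ∘ u` for a unique `T`-algebra morphism `ĥ : (W, ω) ⟶ (B, β)`;
hence composition with `u` is a bijection between `T`-algebra morphisms `(W, ω) ⟶ (B, β)`
and left `lam`-morphisms from `α` to `β`. -/
theorem universal_bimorphisms
    {C : Type u₁} [Category.{v₁} C] {D : Type u₂} [Category.{v₂} D]
    (S : Monad C) (T : Monad D) (H : C ⥤ D) (A : Monad.Algebra S)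
    (lam : H.obj (S.obj A.A) ⟶ T.obj (H.obj A.A))
    (e : T.free.obj (H.obj (S.obj A.A)) ⟶ T.free.obj (H.obj A.A))
    (he : e.f = T.map lam ≫ T.μ.app (H.obj A.A))
    (W : Monad.Algebra T) (q : T.free.obj (H.obj A.A) ⟶ W)
    (hq : e ≫ q = T.free.map (H.map A.a) ≫ q)
    (huniv : ∀ (B : Monad.Algebra T) (k : T.free.obj (H.obj A.A) ⟶ B),
      e ≫ k = T.free.map (H.map A.a) ≫ k → ∃! k' : W ⟶ B, q ≫ k' = k) :
    (lam ≫ T.map (T.η.app (H.obj A.A) ≫ q.f) ≫ W.a =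
      H.map A.a ≫ (T.η.app (H.obj A.A) ≫ q.f)) ∧
    (∀ (B : Monad.Algebra T) (h : H.obj A.A ⟶ B.A),
      lam ≫ T.map h ≫ B.a = H.map A.a ≫ h →
        ∃! hhat : W ⟶ B, (T.η.app (H.obj A.A) ≫ q.f) ≫ hhat.f = h) ∧
    (∀ B : Monad.Algebra T,
      ∃ eqv : (W ⟶ B) ≃ {h : H.obj A.A ⟶ B.A // lam ≫ T.map h ≫ B.a = H.map A.a ≫ h},
        ∀ k : W ⟶ B, (eqv k).1 = (T.η.app (H.obj A.A) ≫ q.f) ≫ k.f) := by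
  have ηnat : ∀ {X Y : D} (f : X ⟶ Y), f ≫ T.η.app Y = T.η.app X ≫ T.map f :=
    fun f => by simpa using T.η.naturality f
  have μnat : ∀ {X Y : D} (f : X ⟶ Y),
      T.map (T.map f) ≫ T.μ.app Y = T.μ.app X ≫ T.map f :=
    fun f => by simpa using T.μ.naturality f
  have hqf : e.f ≫ q.f = T.map (H.map A.a) ≫ q.f := congrArg Monad.Algebra.Hom.f hq
  have hqh : T.map q.f ≫ W.a = T.μ.app (H.obj A.A) ≫ q.f := q.h
  have claim1 : lam ≫ T.map (T.η.app (H.obj A.A) ≫ q.f) ≫ W.a =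
      H.map A.a ≫ (T.η.app (H.obj A.A) ≫ q.f) := by
    have lhs : lam ≫ T.map (T.η.app (H.obj A.A) ≫ q.f) ≫ W.a = lam ≫ q.f := by
      erw [Functor.map_comp, Category.assoc, hqh, Monad.right_unit_assoc]
    have rhs : H.map A.a ≫ (T.η.app (H.obj A.A) ≫ q.f) = lam ≫ q.f := by
      erw [← Category.assoc, ηnat, Category.assoc, ← hqf, he,
        ← Category.assoc, ← Category.assoc, ← ηnat lam]
      show ((lam ≫ T.η.app (T.obj (H.obj A.A))) ≫ T.μ.app (H.obj A.A)) ≫ q.f = lam ≫ q.f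
      erw [Category.assoc, Category.assoc, Monad.left_unit_assoc]
    rw [lhs, rhs]
  have part2 : ∀ (B : Monad.Algebra T) (h : H.obj A.A ⟶ B.A),
      lam ≫ T.map h ≫ B.a = H.map A.a ≫ h →
      ∃! hhat : W ⟶ B, (T.η.app (H.obj A.A) ≫ q.f) ≫ hhat.f = h := by
    intro B h hh
    have kh : T.map (T.map h ≫ B.a) ≫ B.a = T.μ.app (H.obj A.A) ≫ T.map h ≫ B.a := by
      rw [Functor.map_comp, Category.assoc, ← B.assoc, ← Category.assoc, ← Category.assoc,
        μnat]
    let k : T.free.obj (H.obj A.A) ⟶ B := ⟨T.map h ≫ B.a, by exact kh⟩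
    have hk : e ≫ k = T.free.map (H.map A.a) ≫ k := by
      apply Monad.Algebra.Hom.ext
      show e.f ≫ (T.map h ≫ B.a) = T.map (H.map A.a) ≫ (T.map h ≫ B.a)
      erw [he, Category.assoc]
      calc T.map lam ≫ T.μ.app _ ≫ T.map h ≫ B.a
          = T.map lam ≫ T.map (T.map h) ≫ T.μ.app _ ≫ B.a := by
            rw [← Category.assoc (T.μ.app _), ← μnat, Category.assoc]
        _ = T.map lam ≫ T.map (T.map h) ≫ T.map B.a ≫ B.a := by rw [B.assoc]
        _ = T.map (lam ≫ T.map h ≫ B.a) ≫ B.a := by simp [Functor.map_comp]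
        _ = T.map (H.map A.a ≫ h) ≫ B.a := by rw [hh]
        _ = T.map (H.map A.a) ≫ T.map h ≫ B.a := by simp [Functor.map_comp]
    obtain ⟨k', hk', huk⟩ := huniv B k hk
    have hk'f : q.f ≫ k'.f = T.map h ≫ B.a := congrArg Monad.Algebra.Hom.f hk'
    refine ⟨k', ?_, ?_⟩
    · show (T.η.app (H.obj A.A) ≫ q.f) ≫ k'.f = h
      erw [Category.assoc, hk'f, ← Category.assoc, ← ηnat, Category.assoc]
      simp [B.unit]
    · intro y hy
      apply huk
      apply Monad.Algebra.Hom.ext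
      show q.f ≫ y.f = T.map h ≫ B.a
      rw [← hy]
      simp only [Functor.map_comp, Category.assoc]
      erw [y.h, Functor.map_comp, Category.assoc, ← Category.assoc (T.map q.f), hqh]
      erw [Category.assoc, Monad.right_unit_assoc]
      rfl
  refine ⟨claim1, part2, ?_⟩
  intro B
  have prop : ∀ k : W ⟶ B, lam ≫ T.map ((T.η.app (H.obj A.A) ≫ q.f) ≫ k.f) ≫ B.a =
      H.map A.a ≫ (T.η.app (H.obj A.A) ≫ q.f) ≫ k.f := by
    intro k
    rw [Functor.map_comp, Category.assoc, k.h, ← Category.assoc (T.map _),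
      ← Category.assoc lam, Category.assoc lam, ← Category.assoc (H.map A.a),
      ← claim1]
    simp
  let fwd : (W ⟶ B) → {h : H.obj A.A ⟶ B.A // lam ≫ T.map h ≫ B.a = H.map A.a ≫ h} :=
    fun k => ⟨(T.η.app (H.obj A.A) ≫ q.f) ≫ k.f, prop k⟩
  have hbij : Function.Bijective fwd := by
    constructor
    · intro k₁ k₂ hk
      obtain ⟨k', -, huk⟩ := part2 B (fwd k₁).1 (fwd k₁).2
      have h1 := huk k₁ rfl
      have h2 := huk k₂ (congrArg Subtype.val hk).symm
      rw [h1, h2]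
    · rintro ⟨h, hh⟩
      obtain ⟨k', hk', -⟩ := part2 B h hh
      exact ⟨k', Subtype.ext hk'⟩
  exact ⟨Equiv.ofBijective fwd hbij, fun k => rfl⟩
end

section
/- Let S be a monad on C, T a monad on D, H : C → D a functor, (A, α) and (A', α') Eilenberg-Moore S-algebras for which the classifying coequalizers (W_α, ω_α) and (W_{α'}, ω_{α'}) exist, and λ_A : H(S(A)) → T(H(A)), λ_{A'} : H(S(A')) → T(H(A')) morphisms in D. Then every S-algebra morphism f : (A, α) → (A', α') with respect to which λ is natural, i.e. satisfying T(H(f)) ∘ λ_A = λ_{A'} ∘ H(S(f)), induces a unique T-algebra morphism Ĥ(f) : (W_α, ω_α) → (W_{α'}, ω_{α'}) satisfying Ĥ(f) ∘ q_α = q_{α'} ∘ F^T(H(f)). Moreover Ĥ(id) = id, and Ĥ(g ∘ f) = Ĥ(g) ∘ Ĥ(f) whenever Ĥ(f) and Ĥ(g) are both induced in this way. -/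
open CategoryTheory

universe v₁ v₂ u₁ u₂

/-- **Local functoriality of classifying objects.**  Let `S` be a monad on `C`, `T` a monad
on `D` and `H : C ⥤ D` a functor.  Let `(A, α), (A', α'), (A'', α'')` be Eilenberg-Moore
`S`-algebras equipped with morphisms `lamA : H(S(A)) ⟶ T(H(A))` (and similarly `lamA'`,
`lamA''`), for which the classifying coequalizers `(W, q), (W', q'), (W'', q'')` of the
parallel pairs `μ^T ∘ T(lam), F^T(H(structure map))` exist in `EM(T)` (the coequalizer data
is given explicitly by `e, he, hq, huniv` etc.).  Then:
* every `S`-algebra morphism `f : (A, α) ⟶ (A', α')` with respect to which `lam` is natural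
  induces a unique `T`-algebra morphism `F : W ⟶ W'` with `q ≫ F = F^T(H(f)) ≫ q'`;
* the identity morphism `𝟙 W` satisfies the defining equation for the morphism induced by
  `𝟙 A` (so `Ĥ(id) = id`);
* whenever `F` and `G` are induced by `f` and `g` as above, the composite `F ≫ G` satisfies
  the defining equation for the morphism induced by `f ≫ g` (so `Ĥ(g ∘ f) = Ĥ(g) ∘ Ĥ(f)`). -/
theorem classifying_object_local_functoriality
    {C : Type u₁} [Category.{v₁} C] {D : Type u₂} [Category.{v₂} D]
    (S : Monad C) (T : Monad D) (H : C ⥤ D)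
    (A A' A'' : Monad.Algebra S)
    (lamA : H.obj (S.obj A.A) ⟶ T.obj (H.obj A.A))
    (lamA' : H.obj (S.obj A'.A) ⟶ T.obj (H.obj A'.A))
    (lamA'' : H.obj (S.obj A''.A) ⟶ T.obj (H.obj A''.A))
    (e : T.free.obj (H.obj (S.obj A.A)) ⟶ T.free.obj (H.obj A.A))
    (he : e.f = T.map lamA ≫ T.μ.app (H.obj A.A))
    (e' : T.free.obj (H.obj (S.obj A'.A)) ⟶ T.free.obj (H.obj A'.A))
    (he' : e'.f = T.map lamA' ≫ T.μ.app (H.obj A'.A))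
    (e'' : T.free.obj (H.obj (S.obj A''.A)) ⟶ T.free.obj (H.obj A''.A))
    (he'' : e''.f = T.map lamA'' ≫ T.μ.app (H.obj A''.A))
    (W : Monad.Algebra T) (q : T.free.obj (H.obj A.A) ⟶ W)
    (hq : e ≫ q = T.free.map (H.map A.a) ≫ q)
    (huniv : ∀ (B : Monad.Algebra T) (k : T.free.obj (H.obj A.A) ⟶ B),
      e ≫ k = T.free.map (H.map A.a) ≫ k → ∃! k' : W ⟶ B, q ≫ k' = k)
    (W' : Monad.Algebra T) (q' : T.free.obj (H.obj A'.A) ⟶ W')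
    (hq' : e' ≫ q' = T.free.map (H.map A'.a) ≫ q')
    (huniv' : ∀ (B : Monad.Algebra T) (k : T.free.obj (H.obj A'.A) ⟶ B),
      e' ≫ k = T.free.map (H.map A'.a) ≫ k → ∃! k' : W' ⟶ B, q' ≫ k' = k)
    (W'' : Monad.Algebra T) (q'' : T.free.obj (H.obj A''.A) ⟶ W'')
    (hq'' : e'' ≫ q'' = T.free.map (H.map A''.a) ≫ q'')
    (huniv'' : ∀ (B : Monad.Algebra T) (k : T.free.obj (H.obj A''.A) ⟶ B),
      e'' ≫ k = T.free.map (H.map A''.a) ≫ k → ∃! k' : W'' ⟶ B, q'' ≫ k' = k) :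
    (∀ f : A ⟶ A',
      lamA ≫ T.map (H.map f.f) = H.map (S.map f.f) ≫ lamA' →
        ∃! F : W ⟶ W', q ≫ F = T.free.map (H.map f.f) ≫ q') ∧
    (q ≫ 𝟙 W = T.free.map (H.map (𝟙 A.A)) ≫ q) ∧
    (∀ (f : A ⟶ A') (g : A' ⟶ A'') (F : W ⟶ W') (G : W' ⟶ W''),
      lamA ≫ T.map (H.map f.f) = H.map (S.map f.f) ≫ lamA' →
      lamA' ≫ T.map (H.map g.f) = H.map (S.map g.f) ≫ lamA'' →
      q ≫ F = T.free.map (H.map f.f) ≫ q' →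
      q' ≫ G = T.free.map (H.map g.f) ≫ q'' →
      q ≫ (F ≫ G) = T.free.map (H.map (f ≫ g).f) ≫ q'') := by
  refine ⟨fun f hf => ?_, by simp, fun f g F G _ _ hF hG => ?_⟩
  · apply huniv
    have key : e ≫ T.free.map (H.map f.f) = T.free.map (H.map (S.map f.f)) ≫ e' := by
      ext
      simp only [Monad.Algebra.comp_f, he, he', Monad.free_map_f, Category.assoc]
      change (T.map lamA ≫ T.μ.app (H.obj A.A)) ≫ T.map (H.map f.f) =
        T.map (H.map (S.map f.f)) ≫ T.map lamA' ≫ T.μ.app (H.obj A'.A)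
      rw [Category.assoc, ← T.μ.naturality (H.map f.f)]
      simp only [Functor.comp_map, ← Category.assoc, ← T.map_comp]
      rw [hf]
    have key2 : T.free.map (H.map A.a) ≫ T.free.map (H.map f.f)
        = T.free.map (H.map (S.map f.f)) ≫ T.free.map (H.map A'.a) := by
      simp only [← Functor.map_comp, ← H.map_comp]
      rw [← f.h]
    rw [← Category.assoc, key, Category.assoc, hq', ← Category.assoc, ← key2, Category.assoc]
  · rw [← Category.assoc, hF, Category.assoc, hG, ← Category.assoc, ← Functor.map_comp,
      ← H.map_comp]
    rfl
end

section
/- Let S be a monad on C, T a monad on D, H : C → D a functor, and λ : H∘S ⇒ T∘H a natural transformation. If for every Eilenberg-Moore S-algebra (A, α) the classifying coequalizer (W_α, ω_α) exists in EM(T), then the assignment (A, α) ↦ (W_α, ω_α) extends to a functor Ĥ : EM(S) → EM(T), whose action on an S-algebra morphism f : (A, α) → (A', α') is the unique T-algebra morphism Ĥ(f) satisfying Ĥ(f) ∘ q_α = q_{α'} ∘ F^T(H(f)). -/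
open CategoryTheory

universe v₁ v₂ u₁ u₂

/-- **Functorial universal bimorphisms.**  Let `S` be a monad on `C`, `T` a monad on `D`,
`H : C ⥤ D` a functor and `lam : H∘S ⟹ T∘H` a natural transformation.  Suppose that for
every Eilenberg-Moore `S`-algebra `(A, α)` the classifying coequalizer `(W α, q α)` of the
parallel pair `μ^T_{H(A)} ∘ T(lam_A), F^T(H(α)) : F^T(H(S(A))) ⇉ F^T(H(A))` exists in
`EM(T)` (the coequalizer data being given explicitly by `e, he, W, q, hq, huniv`).  Then the
assignment `(A, α) ↦ W α` extends to a functor `Ĥ : EM(S) ⥤ EM(T)` whose action on an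
`S`-algebra morphism `f : α ⟶ α'` is the unique `T`-algebra morphism `Ĥ(f)` satisfying
`Ĥ(f) ∘ q α = q α' ∘ F^T(H(f))`. -/
theorem classifying_objects_functorial
    {C : Type u₁} [Category.{v₁} C] {D : Type u₂} [Category.{v₂} D]
    (S : Monad C) (T : Monad D) (H : C ⥤ D)
    (lam : S.toFunctor ⋙ H ⟶ H ⋙ T.toFunctor)
    (e : ∀ α : Monad.Algebra S, T.free.obj (H.obj (S.obj α.A)) ⟶ T.free.obj (H.obj α.A))
    (he : ∀ α : Monad.Algebra S, (e α).f = T.map (lam.app α.A) ≫ T.μ.app (H.obj α.A))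
    (W : Monad.Algebra S → Monad.Algebra T)
    (q : ∀ α : Monad.Algebra S, T.free.obj (H.obj α.A) ⟶ W α)
    (hq : ∀ α : Monad.Algebra S, e α ≫ q α = T.free.map (H.map α.a) ≫ q α)
    (huniv : ∀ (α : Monad.Algebra S) (B : Monad.Algebra T)
      (k : T.free.obj (H.obj α.A) ⟶ B),
      e α ≫ k = T.free.map (H.map α.a) ≫ k → ∃! k' : W α ⟶ B, q α ≫ k' = k) :
    ∃ (Hhat : Monad.Algebra S ⥤ Monad.Algebra T) (hobj : ∀ α, Hhat.obj α = W α),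
      ∀ (α α' : Monad.Algebra S) (f : α ⟶ α'),
        q α ≫ (eqToHom (hobj α).symm ≫ Hhat.map f ≫ eqToHom (hobj α')) =
          T.free.map (H.map f.f) ≫ q α' := by
  have key : ∀ (α α' : Monad.Algebra S) (f : α ⟶ α'),
      e α ≫ (T.free.map (H.map f.f) ≫ q α') =
        T.free.map (H.map α.a) ≫ (T.free.map (H.map f.f) ≫ q α') := by
    intro α α' f
    have h1 : e α ≫ T.free.map (H.map f.f) = T.free.map (H.map (S.map f.f)) ≫ e α' := by
      ext
      simp only [Monad.Algebra.comp_f, he, Monad.free_map_f, Category.assoc]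
      show (T.map (lam.app α.A) ≫ T.μ.app (H.obj α.A)) ≫ T.map (H.map f.f) =
        T.map (H.map (S.map f.f)) ≫ (T.map (lam.app α'.A) ≫ T.μ.app (H.obj α'.A))
      simp only [Category.assoc]
      rw [← T.μ.naturality (H.map f.f)]
      simp only [Functor.comp_map, ← Category.assoc, ← T.map_comp]
      exact congrArg (· ≫ T.μ.app (H.obj α'.A)) (T.toFunctor.congr_map (lam.naturality f.f).symm)
    have h2 : T.free.map (H.map α.a) ≫ T.free.map (H.map f.f)
        = T.free.map (H.map (S.map f.f)) ≫ T.free.map (H.map α'.a) := by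
      rw [← Functor.map_comp, ← H.map_comp, ← f.h, H.map_comp, Functor.map_comp]
    rw [← Category.assoc, h1, Category.assoc, hq, ← Category.assoc, ← h2, Category.assoc]
  refine ⟨CategoryTheory.Functor.mk W (fun {α α'} f =>
      ((huniv α (W α') _ (key α α' f)).exists).choose) ?_ ?_, fun _ => rfl, ?_⟩
  · intro α
    refine ((huniv α (W α) _ (key α α (𝟙 α))).unique
      ((huniv α (W α) _ (key α α (𝟙 α))).exists.choose_spec) ?_)
    simp
  · intro α α' α'' f g
    refine ((huniv α (W α'') _ (key α α'' (f ≫ g))).unique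
      ((huniv α (W α'') _ (key α α'' (f ≫ g))).exists.choose_spec) ?_)
    rw [← Category.assoc, ((huniv α (W α') _ (key α α' f)).exists).choose_spec,
      Category.assoc, ((huniv α' (W α'') _ (key α' α'' g)).exists).choose_spec]
    simp
  · intro α α' f
    simp only [eqToHom_refl, Category.comp_id, Category.id_comp]
    exact ((huniv α (W α') _ (key α α' f)).exists).choose_spec
end

section
/- Let S be a monad on C, T a monad on D, H : C → D a functor, A an object of C, and suppose morphisms λ_A : H(S(A)) → T(H(A)) and λ_{S(A)} : H(S²(A)) → T(H(S(A))) are given which satisfy the Kleisli axioms at A, namely η^T_{H(A)} = λ_A ∘ H(η^S_A) and μ^T_{H(A)} ∘ T(λ_A) ∘ λ_{S(A)} = λ_A ∘ H(μ^S_A), and which are natural with respect to η^S_A, namely T(H(η^S_A)) ∘ λ_A = λ_{S(A)} ∘ H(S(η^S_A)). Then the T-algebra morphism μ^T_{H(A)} ∘ T(λ_A) : F^T(H(S(A))) → F^T(H(A)) is a coequalizer in EM(T) of the parallel pair μ^T_{H(S(A))} ∘ T(λ_{S(A)}) and F^T(H(μ^S_A)) from F^T(H(S²(A))) to F^T(H(S(A))).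 In particular the classifying coequalizer at the free S-algebra (S(A), μ^S_A) exists and is isomorphic to F^T(H(A)). -/
open CategoryTheory

universe v₁ v₂ u₁ u₂

/-- **The classifying coequalizer at a free algebra.**  Let `S` be a monad on `C`, `T` a
monad on `D`, `H : C ⥤ D` a functor, `A` an object of `C`, and let
`lamA : H(S(A)) ⟶ T(H(A))` and `lamSA : H(S²(A)) ⟶ T(H(S(A)))` satisfy the Kleisli axioms
at `A` and be natural with respect to `η^S_A`.  Let `e : F^T(H(S(A))) ⟶ F^T(H(A))` be the
`T`-algebra morphism with underlying morphism `μ^T_{H(A)} ∘ T(lamA)`, and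
`p : F^T(H(S²(A))) ⟶ F^T(H(S(A)))` the one with underlying morphism
`μ^T_{H(S(A))} ∘ T(lamSA)`.  Then `e` is a coequalizer in `EM(T)` of the parallel pair
`p, F^T(H(μ^S_A))`; in particular the classifying coequalizer at the free `S`-algebra
`(S(A), μ^S_A)` exists and is isomorphic to `F^T(H(A))`. -/
theorem classifying_coequalizer_at_free_algebra
    {C : Type u₁} [Category.{v₁} C] {D : Type u₂} [Category.{v₂} D]
    (S : Monad C) (T : Monad D) (H : C ⥤ D) (A : C)
    (lamA : H.obj (S.obj A) ⟶ T.obj (H.obj A))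
    (lamSA : H.obj (S.obj (S.obj A)) ⟶ T.obj (H.obj (S.obj A)))
    (hunit : H.map (S.η.app A) ≫ lamA = T.η.app (H.obj A))
    (hmul : lamSA ≫ T.map lamA ≫ T.μ.app (H.obj A) = H.map (S.μ.app A) ≫ lamA)
    (hnat : lamA ≫ T.map (H.map (S.η.app A)) = H.map (S.map (S.η.app A)) ≫ lamSA)
    (e : T.free.obj (H.obj (S.obj A)) ⟶ T.free.obj (H.obj A))
    (he : e.f = T.map lamA ≫ T.μ.app (H.obj A))
    (p : T.free.obj (H.obj (S.obj (S.obj A))) ⟶ T.free.obj (H.obj (S.obj A)))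
    (hp : p.f = T.map lamSA ≫ T.μ.app (H.obj (S.obj A))) :
    p ≫ e = T.free.map (H.map (S.μ.app A)) ≫ e ∧
    ∀ (B : Monad.Algebra T) (k : T.free.obj (H.obj (S.obj A)) ⟶ B),
      p ≫ k = T.free.map (H.map (S.μ.app A)) ≫ k →
        ∃! k' : T.free.obj (H.obj A) ⟶ B, e ≫ k' = k := by
  constructor
  · apply Monad.Algebra.Hom.ext
    show p.f ≫ e.f = T.map (H.map (S.μ.app A)) ≫ e.f
    erw [he, hp, Category.assoc, ← T.μ.naturality_assoc lamA, Functor.comp_map, ← T.assoc,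
      ← Functor.map_comp_assoc, ← Functor.map_comp_assoc, Category.assoc, hmul,
      Functor.map_comp, Category.assoc]
    rfl
  · intro B k hk
    have hk' : p.f ≫ k.f = T.map (H.map (S.μ.app A)) ≫ k.f := by
      have := congrArg Monad.Algebra.Hom.f hk
      exact this
    refine ⟨⟨T.map (H.map (S.η.app A)) ≫ k.f, ?_⟩, ?_, ?_⟩
    · -- algebra morphism condition
      show T.map (T.map (H.map (S.η.app A)) ≫ k.f) ≫ B.a =
        T.μ.app (H.obj A) ≫ T.map (H.map (S.η.app A)) ≫ k.f
      erw [Functor.map_comp, Category.assoc, k.h]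
      show _ = T.μ.app _ ≫ T.map (H.map (S.η.app A)) ≫ k.f
      erw [← T.μ.naturality_assoc]
      rfl
    · -- e ≫ k' = k
      apply Monad.Algebra.Hom.ext
      show e.f ≫ T.map (H.map (S.η.app A)) ≫ k.f = k.f
      erw [he, Category.assoc, ← T.μ.naturality_assoc, Functor.comp_map,
        ← Functor.map_comp_assoc, hnat, Functor.map_comp, Category.assoc]
      erw [← Category.assoc (T.map lamSA), ← hp, hk', ← Functor.map_comp_assoc,
        ← H.map_comp, S.right_unit]
      simp
      exact Category.id_comp _
    · -- uniqueness
      intro m hm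
      apply Monad.Algebra.Hom.ext
      have hmf : e.f ≫ m.f = k.f := congrArg Monad.Algebra.Hom.f hm
      show m.f = T.map (H.map (S.η.app A)) ≫ k.f
      erw [← hmf, he, Category.assoc, ← Functor.map_comp_assoc, hunit]
      erw [← Category.assoc, T.right_unit, Category.id_comp]
end

section
/- Let S be a monad on C, T a monad on D, H : C → D a functor, and λ : H∘S ⇒ T∘H a Kleisli law such that for every Eilenberg-Moore S-algebra the classifying coequalizer exists, so that the functor Ĥ : EM(S) → EM(T) is defined. Then there is a natural isomorphism F^T ∘ H ≅ Ĥ ∘ F^S of functors C → EM(T), where F^S : C → EM(S) and F^T : D → EM(T) are the free algebra functors. -/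
open CategoryTheory

universe v₁ v₂ u₁ u₂

/-- **Universal bimorphisms and free constructions.**  Let `S` be a monad on `C`, `T` a monad
on `D`, `H : C ⥤ D` a functor, and `lam : H∘S ⟹ T∘H` a Kleisli law (`hunit`, `hmul`).
Suppose that for every Eilenberg-Moore `S`-algebra the classifying coequalizer exists (the
data being given by `e, he, W, q, hq, huniv`), and let `Ĥ : EM(S) ⥤ EM(T)` be the induced
functor, i.e. a functor with `Ĥ(α) = W α` whose action on morphisms is characterized by
`Ĥ(f) ∘ q α = q α' ∘ F^T(H(f))`.  Then there is a natural isomorphism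
`F^T ∘ H ≅ Ĥ ∘ F^S`. -/
theorem classifying_objects_commute_with_free
    {C : Type u₁} [Category.{v₁} C] {D : Type u₂} [Category.{v₂} D]
    (S : Monad C) (T : Monad D) (H : C ⥤ D)
    (lam : S.toFunctor ⋙ H ⟶ H ⋙ T.toFunctor)
    (hunit : ∀ A : C, H.map (S.η.app A) ≫ lam.app A = T.η.app (H.obj A))
    (hmul : ∀ A : C, H.map (S.μ.app A) ≫ lam.app A =
      lam.app (S.obj A) ≫ T.map (lam.app A) ≫ T.μ.app (H.obj A))
    (e : ∀ α : Monad.Algebra S, T.free.obj (H.obj (S.obj α.A)) ⟶ T.free.obj (H.obj α.A))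
    (he : ∀ α : Monad.Algebra S, (e α).f = T.map (lam.app α.A) ≫ T.μ.app (H.obj α.A))
    (W : Monad.Algebra S → Monad.Algebra T)
    (q : ∀ α : Monad.Algebra S, T.free.obj (H.obj α.A) ⟶ W α)
    (hq : ∀ α : Monad.Algebra S, e α ≫ q α = T.free.map (H.map α.a) ≫ q α)
    (huniv : ∀ (α : Monad.Algebra S) (B : Monad.Algebra T)
      (k : T.free.obj (H.obj α.A) ⟶ B),
      e α ≫ k = T.free.map (H.map α.a) ≫ k → ∃! k' : W α ⟶ B, q α ≫ k' = k)
    (Hhat : Monad.Algebra S ⥤ Monad.Algebra T)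
    (hobj : ∀ α, Hhat.obj α = W α)
    (hmap : ∀ (α α' : Monad.Algebra S) (f : α ⟶ α'),
      q α ≫ (eqToHom (hobj α).symm ≫ Hhat.map f ≫ eqToHom (hobj α')) =
        T.free.map (H.map f.f) ≫ q α') :
    Nonempty (H ⋙ T.free ≅ S.free ⋙ Hhat) := by
  -- naturality of lam, in convenient component form
  have lnat : ∀ {A A' : C} (f : A ⟶ A'),
      H.map (S.map f) ≫ lam.app A' = lam.app A ≫ T.map (H.map f) := by
    intro A A' f
    simpa using lam.naturality f
  have lnatη : ∀ A : C, H.map (S.map (S.η.app A)) ≫ lam.app (S.obj A) =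
      lam.app A ≫ T.map (H.map (S.η.app A)) := by
    intro A
    simpa using lam.naturality (S.η.app A)
  -- naturality of μ in convenient component form
  have mnat : ∀ {X Y : D} (f : X ⟶ Y),
      T.μ.app X ≫ T.map f = T.map (T.map f) ≫ T.μ.app Y := by
    intro X Y f
    simpa using (T.μ.naturality f).symm
  have mnatl : ∀ A : C, T.μ.app (H.obj (S.obj A)) ≫ T.map (lam.app A) =
      T.map (T.map (lam.app A)) ≫ T.μ.app (T.obj (H.obj A)) := by
    intro A
    simpa using (T.μ.naturality (lam.app A)).symm
  have mnate : ∀ A : C, T.μ.app (H.obj A) ≫ T.map (H.map (S.η.app A)) =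
      T.map (T.map (H.map (S.η.app A))) ≫ T.μ.app (H.obj (S.obj A)) := by
    intro A
    simpa using (T.μ.naturality (H.map (S.η.app A))).symm
  -- the comparison morphism k_A : F^T(H(S A)) ⟶ F^T(H A), underlying map T(λ_A) ≫ μ
  let k : ∀ A : C, T.free.obj (H.obj (S.obj A)) ⟶ T.free.obj (H.obj A) := fun A =>
    { f := T.map (lam.app A) ≫ T.μ.app (H.obj A)
      h := by
        dsimp
        erw [Functor.map_comp, Category.assoc, T.assoc, ← Category.assoc,
          ← mnatl A, Category.assoc]
        rfl }
  have kf : ∀ A : C, (k A).f = T.map (lam.app A) ≫ T.μ.app (H.obj A) := fun _ => rfl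
  -- k coequalizes the classifying pair of the free algebra
  have keq : ∀ A : C, e (S.free.obj A) ≫ k A = T.free.map (H.map (S.free.obj A).a) ≫ k A := by
    intro A
    ext
    show (e (S.free.obj A)).f ≫ (k A).f = T.map (H.map (S.μ.app A)) ≫ (k A).f
    rw [he, kf]
    calc (T.map (lam.app (S.obj A)) ≫ T.μ.app (H.obj (S.obj A))) ≫
        T.map (lam.app A) ≫ T.μ.app (H.obj A)
        = T.map (lam.app (S.obj A)) ≫ (T.μ.app (H.obj (S.obj A)) ≫
            T.map (lam.app A)) ≫ T.μ.app (H.obj A) := by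
          rw [Category.assoc, Category.assoc]
      _ = T.map (lam.app (S.obj A)) ≫ T.map (T.map (lam.app A)) ≫
            T.map (T.μ.app (H.obj A)) ≫ T.μ.app (H.obj A) := by
          rw [mnatl A, T.assoc]
          simp only [Category.assoc]
      _ = T.map (H.map (S.μ.app A) ≫ lam.app A) ≫ T.μ.app (H.obj A) := by
          rw [hmul, Functor.map_comp, Functor.map_comp, Category.assoc, Category.assoc]
      _ = T.map (H.map (S.μ.app A)) ≫ T.map (lam.app A) ≫ T.μ.app (H.obj A) := by
          rw [Functor.map_comp, Category.assoc]
  -- k is split by F^T(H(η_A))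
  have ksplit : ∀ A : C, T.free.map (H.map (S.η.app A)) ≫ k A = 𝟙 _ := by
    intro A
    ext
    show T.map (H.map (S.η.app A)) ≫ (k A).f = 𝟙 _
    erw [kf, ← Category.assoc, ← Functor.map_comp, hunit, T.right_unit]
    rfl
  have kcancel : ∀ {A : C} {B : Monad.Algebra T} (x y : T.free.obj (H.obj A) ⟶ B),
      k A ≫ x = k A ≫ y → x = y := by
    intro A B x y h
    calc x = (T.free.map (H.map (S.η.app A)) ≫ k A) ≫ x := by rw [ksplit, Category.id_comp]
    _ = (T.free.map (H.map (S.η.app A)) ≫ k A) ≫ y := by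
        rw [Category.assoc, Category.assoc, h]
    _ = y := by rw [ksplit, Category.id_comp]
  -- the inverse direction
  let v : ∀ A : C, T.free.obj (H.obj A) ⟶ W (S.free.obj A) :=
    fun A => T.free.map (H.map (S.η.app A)) ≫ q (S.free.obj A)
  have kv : ∀ A : C, k A ≫ v A = q (S.free.obj A) := by
    intro A
    have hqc := congrArg Monad.Algebra.Hom.f (hq (S.free.obj A))
    rw [Monad.Algebra.comp_f, Monad.Algebra.comp_f, he] at hqc
    dsimp at hqc
    erw [Category.assoc] at hqc
    ext
    show (k A).f ≫ T.map (H.map (S.η.app A)) ≫ (q (S.free.obj A)).f = (q (S.free.obj A)).f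
    rw [kf]
    calc (T.map (lam.app A) ≫ T.μ.app (H.obj A)) ≫ T.map (H.map (S.η.app A)) ≫
          (q (S.free.obj A)).f
        = T.map (lam.app A) ≫ (T.μ.app (H.obj A) ≫ T.map (H.map (S.η.app A))) ≫
            (q (S.free.obj A)).f := by erw [Category.assoc, Category.assoc]
      _ = T.map (lam.app A ≫ T.map (H.map (S.η.app A))) ≫
            T.μ.app (H.obj (S.obj A)) ≫ (q (S.free.obj A)).f := by
          rw [mnate A, Functor.map_comp]
          erw [Category.assoc, Category.assoc]
      _ = T.map (H.map (S.map (S.η.app A)) ≫ lam.app (S.obj A)) ≫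
            T.μ.app (H.obj (S.obj A)) ≫ (q (S.free.obj A)).f := by rw [lnatη]
      _ = T.map (H.map (S.map (S.η.app A))) ≫ T.map (lam.app (S.obj A)) ≫
            T.μ.app (H.obj (S.obj A)) ≫ (q (S.free.obj A)).f := by
          rw [Functor.map_comp, Category.assoc]
      _ = T.map (H.map (S.map (S.η.app A))) ≫ T.map (H.map (S.μ.app A)) ≫
            (q (S.free.obj A)).f := by erw [hqc]; rfl
      _ = _ := by
          erw [← Category.assoc, ← Functor.map_comp, ← Functor.map_comp, S.right_unit, CategoryTheory.Functor.map_id,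
            CategoryTheory.Functor.map_id]
          exact Category.id_comp _
  choose u hu huq using fun A : C => huniv (S.free.obj A) (T.free.obj (H.obj A)) (k A) (keq A)
  have hu' : ∀ A : C, q (S.free.obj A) ≫ u A = k A := fun A => hu A
  have vu : ∀ A : C, v A ≫ u A = 𝟙 _ := by
    intro A
    apply kcancel
    erw [← Category.assoc, kv, hu', Category.comp_id]
  have uv : ∀ A : C, u A ≫ v A = 𝟙 _ := by
    intro A
    obtain ⟨x, -, hun⟩ := huniv (S.free.obj A) (W (S.free.obj A)) (q _) (hq _)
    have h1 : q (S.free.obj A) ≫ (u A ≫ v A) = q (S.free.obj A) := by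
      erw [← Category.assoc, hu', kv]
    rw [hun (u A ≫ v A) h1, hun (𝟙 _) (Category.comp_id _)]
  -- naturality of k
  have knat : ∀ {A A' : C} (f : A ⟶ A'),
      k A ≫ T.free.map (H.map f) = T.free.map (H.map (S.map f)) ≫ k A' := by
    intro A A' f
    ext
    show (k A).f ≫ T.map (H.map f) = T.map (H.map (S.map f)) ≫ (k A').f
    erw [kf, kf, Category.assoc, mnat (H.map f), ← Category.assoc, ← Functor.map_comp,
      ← lnat f, Functor.map_comp, Category.assoc]
    rfl
  have vnat : ∀ {A A' : C} (f : A ⟶ A'),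
      T.free.map (H.map f) ≫ v A' =
        v A ≫ (eqToHom (hobj (S.free.obj A)).symm ≫ Hhat.map (S.free.map f) ≫
          eqToHom (hobj (S.free.obj A'))) := by
    intro A A' f
    apply kcancel
    erw [← Category.assoc (k A), knat, Category.assoc, kv, ← Category.assoc (k A), kv,
      hmap (S.free.obj A) (S.free.obj A') (S.free.map f)]
    rfl
  refine ⟨NatIso.ofComponents (fun A =>
    { hom := v A ≫ eqToHom (hobj (S.free.obj A)).symm
      inv := eqToHom (hobj (S.free.obj A)) ≫ u A
      hom_inv_id := by
        rw [Category.assoc, ← Category.assoc (eqToHom _), eqToHom_trans, eqToHom_refl,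
          Category.id_comp]
        exact vu A
      inv_hom_id := by
        rw [Category.assoc, ← Category.assoc (u A), uv A, Category.id_comp, eqToHom_trans,
          eqToHom_refl] }) ?_⟩
  intro A A' f
  show T.free.map (H.map f) ≫ v A' ≫ eqToHom (hobj (S.free.obj A')).symm =
    (v A ≫ eqToHom (hobj (S.free.obj A)).symm) ≫ Hhat.map (S.free.map f)
  rw [← Category.assoc, vnat f]
  simp
end

section
/- Let S be a monad on C, T a monad on D, L ⊣ R an adjunction with L : C → D, unit η and counit ε, and ρ : S∘R ⇒ R∘T an Eilenberg-Moore law, with transpose Kleisli law λ : L∘S ⇒ T∘L given by λ_A = ε_{T(L(A))} ∘ L(ρ_{L(A)}) ∘ L(S(η_A)). For an Eilenberg-Moore S-algebra (A, α) and an Eilenberg-Moore T-algebra (B, β), a morphism h : A → R(B) is a right ρ-morphism from α to β (i.e. R(β) ∘ ρ_B ∘ S(h) = h ∘ α) if and only if its adjoint transpose ε_B ∘ L(h) : L(A) → B is a left λ-morphism from α to β (i.e. β ∘ T(ε_B ∘ L(h)) ∘ λ_A = (ε_B ∘ L(h)) ∘ L(α)). -/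
open CategoryTheory

universe v₁ v₂ u₁ u₂

/-- **Transposing bimorphisms along an adjunction.**  Let `S` be a monad on `C`, `T` a monad
on `D`, `L ⊣ R` an adjunction (`L : C ⥤ D`) with unit `η` and counit `ε`, and
`ρ : S∘R ⟹ R∘T` an Eilenberg-Moore law whose transpose Kleisli law `λ : L∘S ⟹ T∘L` has
components `λ_A = ε_{T(L(A))} ∘ L(ρ_{L(A)}) ∘ L(S(η_A))`.  For an Eilenberg-Moore
`S`-algebra `(A, α)` and an Eilenberg-Moore `T`-algebra `(B, β)`, a morphism `h : A ⟶ R(B)`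
is a right `ρ`-morphism from `α` to `β` if and only if its adjoint transpose
`ε_B ∘ L(h) : L(A) ⟶ B` is a left `λ`-morphism from `α` to `β`. -/
theorem right_rho_morphism_iff_transpose_left_lambda_morphism
    {C : Type u₁} [Category.{v₁} C] {D : Type u₂} [Category.{v₂} D]
    (S : Monad C) (T : Monad D) {L : C ⥤ D} {R : D ⥤ C} (adj : L ⊣ R)
    (ρ : R ⋙ S.toFunctor ⟶ T.toFunctor ⋙ R)
    (hunit : ∀ B : D, S.η.app (R.obj B) ≫ ρ.app B = R.map (T.η.app B))
    (hmul : ∀ B : D, S.μ.app (R.obj B) ≫ ρ.app B =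
      S.map (ρ.app B) ≫ ρ.app (T.obj B) ≫ R.map (T.μ.app B))
    (A : Monad.Algebra S) (B : Monad.Algebra T) (h : A.A ⟶ R.obj B.A) :
    S.map h ≫ ρ.app B.A ≫ R.map B.a = A.a ≫ h ↔
      (L.map (S.map (adj.unit.app A.A)) ≫ L.map (ρ.app (L.obj A.A)) ≫
          adj.counit.app (T.obj (L.obj A.A))) ≫
        T.map (L.map h ≫ adj.counit.app B.A) ≫ B.a =
      L.map A.a ≫ (L.map h ≫ adj.counit.app B.A) := by
  have hu : ∀ {X Y : C} (f : X ⟶ Y),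
      adj.unit.app X ≫ R.map (L.map f) = f ≫ adj.unit.app Y := by
    intro X Y f; simpa using adj.unit.naturality f
  rw [← Equiv.apply_eq_iff_eq (adj.homEquiv (S.obj A.A) B.A)]
  have e1 : (adj.homEquiv (S.obj A.A) B.A)
      ((L.map (S.map (adj.unit.app A.A)) ≫ L.map (ρ.app (L.obj A.A)) ≫
          adj.counit.app (T.obj (L.obj A.A))) ≫
        T.map (L.map h ≫ adj.counit.app B.A) ≫ B.a) =
      S.map h ≫ ρ.app B.A ≫ R.map B.a := by
    rw [Adjunction.homEquiv_unit]
    simp only [Functor.map_comp, Category.assoc, Functor.comp_obj]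
    rw [← Category.assoc (adj.unit.app _), hu _]
    rw [Category.assoc, ← Category.assoc (adj.unit.app _),
      hu _]
    simp only [Category.assoc, Functor.id_obj, Functor.comp_map]
    rw [← Category.assoc (adj.unit.app _), adj.right_triangle_components]
    simp only [Functor.comp_obj, Functor.id_obj, Category.id_comp]
    have := ρ.naturality (L.map h ≫ adj.counit.app B.A)
    simp only [Functor.comp_map, Functor.map_comp] at this
    simp only [Functor.id_obj] at this
    have this' : ρ.app (L.obj A.A) ≫ R.map (T.map (L.map h)) ≫
        R.map (T.map (adj.counit.app B.A)) ≫ R.map B.a =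
        S.map (R.map (L.map h)) ≫ S.map (R.map (adj.counit.app B.A)) ≫
          ρ.app B.A ≫ R.map B.a := by
      simp only [← Category.assoc]
      rw [this]
      simp only [Category.assoc]
    rw [this']
    have key : (adj.unit.app A.A ≫ R.map (L.map h)) ≫ R.map (adj.counit.app B.A) = h := by
      rw [hu h]
      simp
    simp only [← Category.assoc, ← S.map_comp, key]
  have e2 : (adj.homEquiv (S.obj A.A) B.A)
      (L.map A.a ≫ (L.map h ≫ adj.counit.app B.A)) = A.a ≫ h := by
    rw [Adjunction.homEquiv_unit]
    simp only [Functor.map_comp, Category.assoc]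
    rw [← Category.assoc (adj.unit.app _), hu A.a, Category.assoc,
      ← Category.assoc (adj.unit.app _), hu h]
    simp
  rw [e1, e2]
end

section
/- Let S be a monad on C, T a monad on D, L ⊣ R an adjunction with L : C → D, and ρ : S∘R ⇒ R∘T an Eilenberg-Moore law. If the Eilenberg-Moore category EM(T) has coequalizers of reflexive pairs, then the lifted functor R^ρ : EM(T) → EM(S), which sends a T-algebra (B, β) to the S-algebra (R(B), R(β) ∘ ρ_B), has a left adjoint. -/
open CategoryTheory

universe v₁ v₂ u₁ u₂

variable {C : Type u₁} [Category.{v₁} C] {D : Type u₂} [Category.{v₂} D]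

/-- The lifting `R^ρ : EM(T) ⥤ EM(S)` of `R : D ⥤ C` induced by an Eilenberg-Moore law
`ρ : S∘R ⟹ R∘T`: it sends a `T`-algebra `(B, β)` to the `S`-algebra `(R(B), R(β) ∘ ρ_B)`. -/
def emLift (S : Monad C) (T : Monad D) (R : D ⥤ C)
    (ρ : R ⋙ S.toFunctor ⟶ T.toFunctor ⋙ R)
    (hunit : ∀ B : D, S.η.app (R.obj B) ≫ ρ.app B = R.map (T.η.app B))
    (hmul : ∀ B : D, S.μ.app (R.obj B) ≫ ρ.app B =
      S.map (ρ.app B) ≫ ρ.app (T.obj B) ≫ R.map (T.μ.app B)) :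
    Monad.Algebra T ⥤ Monad.Algebra S where
  obj B :=
    { A := R.obj B.A
      a := ρ.app B.A ≫ R.map B.a
      unit := by
        rw [← Category.assoc, hunit, ← R.map_comp, B.unit]
        simp
      assoc := by
        have hnat := ρ.naturality B.a
        simp only [Functor.comp_map] at hnat
        rw [← Category.assoc, hmul]
        simp only [Category.assoc]
        rw [← R.map_comp, B.assoc, R.map_comp, ← Category.assoc (ρ.app (T.obj B.A)), ← hnat]
        simp }
  map {B B'} h :=
    { f := R.map h.f
      h := by
        have hnat := ρ.naturality h.f
        simp only [Functor.comp_map] at hnat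
        dsimp only
        rw [← Category.assoc, hnat]
        simp only [Category.assoc]
        rw [← R.map_comp, h.h, R.map_comp] }
  map_id B := by
    apply Monad.Algebra.Hom.ext
    simp
  map_comp f g := by
    apply Monad.Algebra.Hom.ext
    simp

/-- **The adjoint lifting theorem.**  Let `S` be a monad on `C`, `T` a monad on `D`,
`L ⊣ R` an adjunction with `L : C ⥤ D`, and `ρ : S∘R ⟹ R∘T` an Eilenberg-Moore law.  If the
Eilenberg-Moore category `EM(T)` has coequalizers of reflexive pairs, then the lifted
functor `R^ρ : EM(T) ⥤ EM(S)`, sending `(B, β)` to `(R(B), R(β) ∘ ρ_B)`, has a left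
adjoint. -/
theorem emLift_isRightAdjoint (S : Monad C) (T : Monad D)
    {L : C ⥤ D} {R : D ⥤ C} (adj : L ⊣ R)
    (ρ : R ⋙ S.toFunctor ⟶ T.toFunctor ⋙ R)
    (hunit : ∀ B : D, S.η.app (R.obj B) ≫ ρ.app B = R.map (T.η.app B))
    (hmul : ∀ B : D, S.μ.app (R.obj B) ≫ ρ.app B =
      S.map (ρ.app B) ≫ ρ.app (T.obj B) ≫ R.map (T.μ.app B))
    [Limits.HasReflexiveCoequalizers (Monad.Algebra T)] :
    (emLift S T R ρ hunit hmul).IsRightAdjoint := by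
  have : R.IsRightAdjoint := adj.isRightAdjoint
  exact isRightAdjoint_square_lift_monadic (emLift S T R ρ hunit hmul)
    (Monad.forget S) (Monad.forget T) R
    (NatIso.ofComponents (fun B => Iso.refl _) (by intros; exact (Category.comp_id _).trans (Category.id_comp _).symm))
end

section
/- Let C be a comonad on a category C₀, D a comonad on a category D₀, and G : C₀ → D₀ a functor. If ρ : D∘G ⇒ G∘C is a natural transformation such that all the relevant equalizers exist—namely, for every Eilenberg-Moore C-coalgebra (A, α), the equalizer in the Eilenberg-Moore category of D-coalgebras of the parallel pair of D-coalgebra morphisms F_D(G(A)) ⇉ F_D(G(C(A))) given by F_D(ρ_A) ∘ δ^D_{G(A)} and F_D(G(α)), where F_D is the cofree D-coalgebra functor—then the assignment (A, α) ↦ (W_α, ω_α) extends to a functor Ĝ from C-coalgebras to D-coalgebras. If, furthermore, ρ is a Kleisli law of comonads, then there is a natural isomorphism F_D ∘ G ≅ Ĝ ∘ F_C, where F_C and F_D are the cofree coalgebra functors. -/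
open CategoryTheory

universe v₁ v₂ u₁ u₂

section Aux

variable {C₀ : Type u₁} [Category.{v₁} C₀] {D₀ : Type u₂} [Category.{v₂} D₀]
    {Cm : Comonad C₀} {Dm : Comonad D₀} {G : C₀ ⥤ D₀}
    (ρ : G ⋙ Dm.toFunctor ⟶ Cm.toFunctor ⋙ G)
    (e : ∀ α : Comonad.Coalgebra Cm,
      Dm.cofree.obj (G.obj α.A) ⟶ Dm.cofree.obj (G.obj (Cm.obj α.A)))
    (he : ∀ α : Comonad.Coalgebra Cm,
      (e α).f = Dm.δ.app (G.obj α.A) ≫ Dm.map (ρ.app α.A))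
    (W : Comonad.Coalgebra Cm → Comonad.Coalgebra Dm)
    (q : ∀ α : Comonad.Coalgebra Cm, W α ⟶ Dm.cofree.obj (G.obj α.A))
    (hq : ∀ α : Comonad.Coalgebra Cm,
      q α ≫ e α = q α ≫ Dm.cofree.map (G.map α.a))
    (huniv : ∀ (α : Comonad.Coalgebra Cm) (B : Comonad.Coalgebra Dm)
      (k : B ⟶ Dm.cofree.obj (G.obj α.A)),
      k ≫ e α = k ≫ Dm.cofree.map (G.map α.a) → ∃! k' : B ⟶ W α, k' ≫ q α = k)

include ρ e he W q hq huniv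

/-- `q α` is a monomorphism in the relevant sense. -/
theorem Aux.q_mono {α : Comonad.Coalgebra Cm} {B : Comonad.Coalgebra Dm}
    {x y : B ⟶ W α} (h : x ≫ q α = y ≫ q α) : x = y := by
  have hk : (x ≫ q α) ≫ e α = (x ≫ q α) ≫ Dm.cofree.map (G.map α.a) := by
    rw [Category.assoc, Category.assoc, hq]
  obtain ⟨k', -, hu⟩ := huniv α B (x ≫ q α) hk
  exact (hu x rfl).trans (hu y h.symm).symm

theorem Aux.equalizes {α α' : Comonad.Coalgebra Cm} (f : α ⟶ α') :
    (q α ≫ Dm.cofree.map (G.map f.f)) ≫ e α' =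
      (q α ≫ Dm.cofree.map (G.map f.f)) ≫ Dm.cofree.map (G.map α'.a) := by
  ext
  have h1 := congrArg Comonad.Coalgebra.Hom.f (hq α)
  simp only [Comonad.Coalgebra.comp_f, Comonad.cofree_map_f, he] at h1 ⊢
  have hρ := ρ.naturality f.f
  dsimp at hρ
  set g : (W α).A ⟶ Dm.obj (G.obj α.A) := (q α).f
  replace h1 : g ≫ Dm.δ.app (G.obj α.A) ≫ Dm.map (ρ.app α.A) = g ≫ Dm.map (G.map α.a) := h1
  show (g ≫ Dm.map (G.map f.f)) ≫ Dm.δ.app (G.obj α'.A) ≫ Dm.map (ρ.app α'.A) =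
    (g ≫ Dm.map (G.map f.f)) ≫ Dm.map (G.map α'.a)
  simp only [Category.assoc]
  calc g ≫ Dm.map (G.map f.f) ≫ Dm.δ.app (G.obj α'.A) ≫ Dm.map (ρ.app α'.A)
      = g ≫ Dm.δ.app (G.obj α.A) ≫ Dm.map (Dm.map (G.map f.f)) ≫
          Dm.map (ρ.app α'.A) := by
        rw [← Category.assoc (Dm.map (G.map f.f)), Dm.δ.naturality]
        simp
    _ = g ≫ Dm.δ.app (G.obj α.A) ≫ Dm.map (ρ.app α.A) ≫
          Dm.map (G.map (Cm.map f.f)) := by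
        rw [← Dm.map_comp, hρ, Dm.map_comp]
    _ = (g ≫ Dm.map (G.map α.a)) ≫ Dm.map (G.map (Cm.map f.f)) := by
        rw [← h1]; simp
    _ = g ≫ Dm.map (G.map f.f) ≫ Dm.map (G.map α'.a) := by
        simp only [Category.assoc, ← Dm.map_comp, ← G.map_comp]
        rw [f.h]

/-- The action of `Ĝ` on morphisms. -/
noncomputable def Aux.GhatMap {α α' : Comonad.Coalgebra Cm} (f : α ⟶ α') :
    W α ⟶ W α' :=
  (huniv α' (W α) (q α ≫ Dm.cofree.map (G.map f.f))
    (Aux.equalizes ρ e he W q hq huniv f)).choose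

theorem Aux.GhatMap_q {α α' : Comonad.Coalgebra Cm} (f : α ⟶ α') :
    Aux.GhatMap ρ e he W q hq huniv f ≫ q α' = q α ≫ Dm.cofree.map (G.map f.f) :=
  (huniv α' (W α) (q α ≫ Dm.cofree.map (G.map f.f))
    (Aux.equalizes ρ e he W q hq huniv f)).choose_spec.1

/-- The functor `Ĝ`. -/
noncomputable def Aux.Ghat : Comonad.Coalgebra Cm ⥤ Comonad.Coalgebra Dm where
  obj := W
  map f := Aux.GhatMap ρ e he W q hq huniv f
  map_id α := by
    apply Aux.q_mono ρ e he W q hq huniv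
    rw [Aux.GhatMap_q]
    simp
  map_comp {α α' α''} f g := by
    apply Aux.q_mono ρ e he W q hq huniv
    show Aux.GhatMap ρ e he W q hq huniv (f ≫ g) ≫ q α'' =
      (Aux.GhatMap ρ e he W q hq huniv f ≫ Aux.GhatMap ρ e he W q hq huniv g) ≫ q α''
    rw [Aux.GhatMap_q, Category.assoc, Aux.GhatMap_q, ← Category.assoc, Aux.GhatMap_q]
    simp

end Aux

section Iso

variable {C₀ : Type u₁} [Category.{v₁} C₀] {D₀ : Type u₂} [Category.{v₂} D₀]
    {Cm : Comonad C₀} {Dm : Comonad D₀} {G : C₀ ⥤ D₀}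
    (ρ : G ⋙ Dm.toFunctor ⟶ Cm.toFunctor ⋙ G)

/-- The comparison morphism `F_D(G A) ⟶ F_D(G (Cm A))` induced by `ρ`. -/
def Aux.k (A : C₀) :
    Dm.cofree.obj (G.obj A) ⟶ Dm.cofree.obj (G.obj ((Cm.cofree.obj A).A)) where
  f := Dm.δ.app (G.obj A) ≫ Dm.map (ρ.app A)
  h := by
    dsimp
    show Dm.δ.app (G.obj A) ≫ Dm.map (Dm.δ.app (G.obj A) ≫ Dm.map (ρ.app A)) =
      (Dm.δ.app (G.obj A) ≫ Dm.map (ρ.app A)) ≫ Dm.δ.app (G.obj (Cm.obj A))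
    rw [Dm.map_comp, Comonad.coassoc_assoc, Category.assoc]
    congr 1
    have hn := Dm.δ.naturality (ρ.app A)
    dsimp at hn
    exact hn.symm

end Iso

/-- **Classifying objects for comonad coalgebras and cofree coalgebras.**  Let `Cm` be a
comonad on `C₀`, `Dm` a comonad on `D₀` and `G : C₀ ⥤ D₀` a functor.  Let
`ρ : Dm∘G ⟹ G∘Cm` be a natural transformation such that for every Eilenberg-Moore
`Cm`-coalgebra `(A, α)` the equalizer `(W α, q α)` in the Eilenberg-Moore category of
`Dm`-coalgebras of the parallel pair `F_D(ρ_A) ∘ δ^D_{G(A)}, F_D(G(α))` exists (the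
equalizer data being given explicitly by `e, he, W, q, hq, huniv`, where `F_D` is the
cofree `Dm`-coalgebra functor).  Then the assignment `(A, α) ↦ W α` extends to a functor
`Ĝ` from `Cm`-coalgebras to `Dm`-coalgebras, characterized by
`q α' ∘ Ĝ(f) = F_D(G(f)) ∘ q α`.  If, furthermore, `ρ` is a Kleisli law of comonads, then
there is a natural isomorphism `F_D ∘ G ≅ Ĝ ∘ F_C`. -/
theorem comonad_classifying_objects
    {C₀ : Type u₁} [Category.{v₁} C₀] {D₀ : Type u₂} [Category.{v₂} D₀]
    (Cm : Comonad C₀) (Dm : Comonad D₀) (G : C₀ ⥤ D₀)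
    (ρ : G ⋙ Dm.toFunctor ⟶ Cm.toFunctor ⋙ G)
    (e : ∀ α : Comonad.Coalgebra Cm,
      Dm.cofree.obj (G.obj α.A) ⟶ Dm.cofree.obj (G.obj (Cm.obj α.A)))
    (he : ∀ α : Comonad.Coalgebra Cm,
      (e α).f = Dm.δ.app (G.obj α.A) ≫ Dm.map (ρ.app α.A))
    (W : Comonad.Coalgebra Cm → Comonad.Coalgebra Dm)
    (q : ∀ α : Comonad.Coalgebra Cm, W α ⟶ Dm.cofree.obj (G.obj α.A))
    (hq : ∀ α : Comonad.Coalgebra Cm,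
      q α ≫ e α = q α ≫ Dm.cofree.map (G.map α.a))
    (huniv : ∀ (α : Comonad.Coalgebra Cm) (B : Comonad.Coalgebra Dm)
      (k : B ⟶ Dm.cofree.obj (G.obj α.A)),
      k ≫ e α = k ≫ Dm.cofree.map (G.map α.a) → ∃! k' : B ⟶ W α, k' ≫ q α = k) :
    ∃ (Ghat : Comonad.Coalgebra Cm ⥤ Comonad.Coalgebra Dm)
      (hobj : ∀ α, Ghat.obj α = W α),
      (∀ (α α' : Comonad.Coalgebra Cm) (f : α ⟶ α'),
        (eqToHom (hobj α).symm ≫ Ghat.map f ≫ eqToHom (hobj α')) ≫ q α' =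
          q α ≫ Dm.cofree.map (G.map f.f)) ∧
      ((∀ A : C₀, ρ.app A ≫ G.map (Cm.ε.app A) = Dm.ε.app (G.obj A)) →
       (∀ A : C₀, ρ.app A ≫ G.map (Cm.δ.app A) =
          Dm.δ.app (G.obj A) ≫ Dm.map (ρ.app A) ≫ ρ.app (Cm.obj A)) →
        Nonempty (G ⋙ Dm.cofree ≅ Cm.cofree ⋙ Ghat)) := by
  refine ⟨Aux.Ghat ρ e he W q hq huniv, fun α => rfl, ?_, ?_⟩
  · intro α α' f
    show (𝟙 _ ≫ Aux.GhatMap ρ e he W q hq huniv f ≫ 𝟙 _) ≫ q α' = _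
    simpa using Aux.GhatMap_q ρ e he W q hq huniv f
  · intro hε hδ
    -- the comparison morphism `k A` equalizes the pair for the cofree `Cm`-coalgebra on `A`
    have hkeq : ∀ A : C₀,
        Aux.k ρ A ≫ e (Cm.cofree.obj A) =
          Aux.k ρ A ≫ Dm.cofree.map (G.map (Cm.cofree.obj A).a) := by
      intro A
      ext
      have hδA := hδ A
      have hn := Dm.δ.naturality (ρ.app A)
      dsimp at hδA hn
      simp only [Comonad.Coalgebra.comp_f, Comonad.cofree_map_f, he]
      show (Dm.δ.app (G.obj A) ≫ Dm.map (ρ.app A)) ≫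
          Dm.δ.app (G.obj (Cm.obj A)) ≫ Dm.map (ρ.app (Cm.obj A)) =
        (Dm.δ.app (G.obj A) ≫ Dm.map (ρ.app A)) ≫ Dm.map (G.map (Cm.δ.app A))
      calc (Dm.δ.app (G.obj A) ≫ Dm.map (ρ.app A)) ≫
              Dm.δ.app (G.obj (Cm.obj A)) ≫ Dm.map (ρ.app (Cm.obj A))
          = Dm.δ.app (G.obj A) ≫
              (Dm.map (ρ.app A) ≫ Dm.δ.app (G.obj (Cm.obj A))) ≫
              Dm.map (ρ.app (Cm.obj A)) := by simp
        _ = Dm.δ.app (G.obj A) ≫ Dm.δ.app (Dm.obj (G.obj A)) ≫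
              Dm.map (Dm.map (ρ.app A)) ≫ Dm.map (ρ.app (Cm.obj A)) := by
            rw [hn]; simp
        _ = Dm.δ.app (G.obj A) ≫ Dm.map (Dm.δ.app (G.obj A)) ≫
              Dm.map (Dm.map (ρ.app A)) ≫ Dm.map (ρ.app (Cm.obj A)) := by
            rw [Comonad.coassoc_assoc]
        _ = Dm.δ.app (G.obj A) ≫
              Dm.map (Dm.δ.app (G.obj A) ≫ Dm.map (ρ.app A) ≫ ρ.app (Cm.obj A)) := by
            simp [Dm.map_comp]
        _ = Dm.δ.app (G.obj A) ≫ Dm.map (ρ.app A ≫ G.map (Cm.δ.app A)) := by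
            rw [← hδA]
        _ = (Dm.δ.app (G.obj A) ≫ Dm.map (ρ.app A)) ≫ Dm.map (G.map (Cm.δ.app A)) := by
            simp [Dm.map_comp]
    -- the induced morphism into `W (Cm.cofree.obj A)`
    let u : ∀ A : C₀, Dm.cofree.obj (G.obj A) ⟶ W (Cm.cofree.obj A) := fun A =>
      (huniv (Cm.cofree.obj A) _ (Aux.k ρ A) (hkeq A)).choose
    have hu : ∀ A : C₀, u A ≫ q (Cm.cofree.obj A) = Aux.k ρ A := fun A =>
      (huniv (Cm.cofree.obj A) _ (Aux.k ρ A) (hkeq A)).choose_spec.1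
    let v : ∀ A : C₀, W (Cm.cofree.obj A) ⟶ Dm.cofree.obj (G.obj A) := fun A =>
      q (Cm.cofree.obj A) ≫ Dm.cofree.map (G.map (Cm.ε.app A))
    have huv : ∀ A : C₀, u A ≫ v A = 𝟙 _ := by
      intro A
      show u A ≫ q (Cm.cofree.obj A) ≫ Dm.cofree.map (G.map (Cm.ε.app A)) = 𝟙 _
      rw [← Category.assoc, hu]
      ext
      have hεA := hε A
      dsimp at hεA
      simp only [Comonad.Coalgebra.comp_f, Comonad.cofree_map_f, Aux.k,
        Comonad.Coalgebra.id_f, Category.assoc, ← Dm.map_comp]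
      show (Dm.δ.app (G.obj A) ≫ Dm.map (ρ.app A)) ≫ Dm.map (G.map (Cm.ε.app A)) =
        𝟙 (Dm.cofree.obj (G.obj A)).A
      simp only [Category.assoc, ← Dm.map_comp]
      rw [hεA, Comonad.right_counit]
      rfl
    have hvu : ∀ A : C₀, v A ≫ u A = 𝟙 _ := by
      intro A
      apply Aux.q_mono ρ e he W q hq huniv
      rw [Category.assoc, hu, Category.id_comp]
      show (q (Cm.cofree.obj A) ≫ Dm.cofree.map (G.map (Cm.ε.app A))) ≫ Aux.k ρ A =
        q (Cm.cofree.obj A)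
      ext
      have h1 := congrArg Comonad.Coalgebra.Hom.f (hq (Cm.cofree.obj A))
      simp only [Comonad.Coalgebra.comp_f, Comonad.cofree_map_f, he] at h1
      have hρ := ρ.naturality (Cm.ε.app A)
      have hn := Dm.δ.naturality (G.map (Cm.ε.app A))
      dsimp at hρ h1 hn
      simp only [Comonad.Coalgebra.comp_f, Comonad.cofree_map_f, Aux.k]
      set g : (W (Cm.cofree.obj A)).A ⟶ Dm.obj (G.obj (Cm.obj A)) := (q (Cm.cofree.obj A)).f
      replace h1 : g ≫ Dm.δ.app (G.obj (Cm.obj A)) ≫ Dm.map (ρ.app (Cm.obj A)) =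
          g ≫ Dm.map (G.map (Cm.δ.app A)) := h1
      show (g ≫ Dm.map (G.map (Cm.ε.app A))) ≫ Dm.δ.app (G.obj A) ≫ Dm.map (ρ.app A) = g
      simp only [Category.assoc]
      calc g ≫ Dm.map (G.map (Cm.ε.app A)) ≫
              Dm.δ.app (G.obj A) ≫ Dm.map (ρ.app A)
          = g ≫ Dm.δ.app (G.obj (Cm.obj A)) ≫
              Dm.map (Dm.map (G.map (Cm.ε.app A)) ≫ ρ.app A) := by
            rw [← Category.assoc (Dm.map (G.map (Cm.ε.app A))), hn]
            simp [Dm.map_comp]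
        _ = g ≫ Dm.δ.app (G.obj (Cm.obj A)) ≫
              Dm.map (ρ.app (Cm.obj A)) ≫ Dm.map (G.map (Cm.map (Cm.ε.app A))) := by
            rw [hρ]; simp
        _ = (g ≫ Dm.map (G.map (Cm.δ.app A))) ≫
              Dm.map (G.map (Cm.map (Cm.ε.app A))) := by
            rw [← h1]; simp
        _ = g := by
            rw [Category.assoc, ← Dm.map_comp, ← G.map_comp, Comonad.right_counit]
            simp
    refine ⟨NatIso.ofComponents (fun A => ⟨u A, v A, huv A, hvu A⟩) ?_⟩
    intro A B f
    show Dm.cofree.map (G.map f) ≫ u B =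
      u A ≫ Aux.GhatMap ρ e he W q hq huniv (Cm.cofree.map f)
    apply Aux.q_mono ρ e he W q hq huniv
    rw [Category.assoc, hu, Category.assoc, Aux.GhatMap_q, ← Category.assoc, hu]
    ext
    have hρ := ρ.naturality f
    have hn := Dm.δ.naturality (G.map f)
    dsimp at hρ hn
    simp only [Comonad.Coalgebra.comp_f, Comonad.cofree_map_f, Aux.k]
    show Dm.map (G.map f) ≫ Dm.δ.app (G.obj B) ≫ Dm.map (ρ.app B) =
      (Dm.δ.app (G.obj A) ≫ Dm.map (ρ.app A)) ≫ Dm.map (G.map (Cm.map f))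
    simp only [Category.assoc]
    rw [← Category.assoc (Dm.map (G.map f)), hn, Category.assoc,
      ← Dm.map_comp, hρ, Dm.map_comp]
end
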